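/- Let σ ∈ {naive, stb, stage, pref, sem} and let 𝕊 be an extension-set such that |𝕊| is odd. If some equivalence class K ∈ K(𝕊) has |K| = 2, then there is no σ-compact AF F with σ(F) = 𝕊. -/

import Mathlib

structure AF where
  A : Finset ℕ
  R : Set (ℕ × ℕ)
  R_sub : ∀ p ∈ R, p.1 ∈ A ∧ p.2 ∈ A

namespace AF

def cf (F : AF) : Set (Set ℕ) :=
  {S | S ⊆ ↑F.A ∧ ∀ a ∈ S, ∀ b ∈ S, (a, b) ∉ F.R}

def defends (F : AF) (S : Set ℕ) (a : ℕ) : Prop :=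
  ∀ b, (b, a) ∈ F.R → ∃ s ∈ S, (s, b) ∈ F.R

def adm (F : AF) : Set (Set ℕ) :=
  {S | S ∈ F.cf ∧ ∀ a ∈ S, F.defends S a}

def rng (F : AF) (S : Set ℕ) : Set ℕ :=
  S ∪ {b | ∃ s ∈ S, (s, b) ∈ F.R}

def naive (F : AF) : Set (Set ℕ) :=
  {S | S ∈ F.cf ∧ ∀ T ∈ F.cf, S ⊆ T → S = T}

def stb (F : AF) : Set (Set ℕ) :=
  {S | S ∈ F.cf ∧ ∀ a ∈ F.A, a ∉ S → ∃ s ∈ S, (s, a) ∈ F.R}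

def pref (F : AF) : Set (Set ℕ) :=
  {S | S ∈ F.adm ∧ ∀ T ∈ F.adm, S ⊆ T → S = T}

def stage (F : AF) : Set (Set ℕ) :=
  {S | S ∈ F.cf ∧ ¬ ∃ T ∈ F.cf, F.rng S ⊂ F.rng T}

def sem (F : AF) : Set (Set ℕ) :=
  {S | S ∈ F.adm ∧ ¬ ∃ T ∈ F.adm, F.rng S ⊂ F.rng T}

end AF

abbrev Semantics := AF → Set (Set ℕ)

def StandardSemantics : Set Semantics :=
  {AF.naive, AF.stb, AF.stage, AF.pref, AF.sem}

def AFCompact (σ : Semantics) (F : AF) : Prop :=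
  ∀ a ∈ F.A, ∃ S ∈ σ F, a ∈ S

def CAF (σ : Semantics) : Set AF := {F | AFCompact σ F}

def ArgS (𝕊 : Set (Set ℕ)) : Set ℕ := ⋃₀ 𝕊

def PairsS (𝕊 : Set (Set ℕ)) : Set (ℕ × ℕ) :=
  {p | ∃ S ∈ 𝕊, p.1 ∈ S ∧ p.2 ∈ S}

def IsExtensionSet (𝕊 : Set (Set ℕ)) : Prop := (ArgS 𝕊).Finite

def AFStep (F : AF) (a b : ℕ) : Prop := (a, b) ∈ F.R ∨ (b, a) ∈ F.R

def AFConnected (F : AF) : Prop :=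
  ∀ a ∈ F.A, ∀ b ∈ F.A, Relation.ReflTransGen (AFStep F) a b

def sameComp (F : AF) (a b : ℕ) : Prop := Relation.ReflTransGen (AFStep F) a b

def comps (F : AF) : Set (Set ℕ) :=
  {K | ∃ a ∈ F.A, K = {b ∈ (↑F.A : Set ℕ) | sameComp F a b}}

def nopairs (𝕊 : Set (Set ℕ)) (a b : ℕ) : Prop :=
  a ∈ ArgS 𝕊 ∧ b ∈ ArgS 𝕊 ∧ (a, b) ∉ PairsS 𝕊

def compsS (𝕊 : Set (Set ℕ)) : Set (Set ℕ) :=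
  {K | ∃ a ∈ ArgS 𝕊, K = {b ∈ ArgS 𝕊 | Relation.ReflTransGen (nopairs 𝕊) a b}}

noncomputable def sigmaMax (σ : Semantics) (n : ℕ) : ℕ :=
  sSup {k | ∃ F : AF, F.A.card = n ∧ (σ F).ncard = k}

noncomputable def sigmaMaxCon (σ : Semantics) (n : ℕ) : ℕ :=
  sSup {k | ∃ F : AF, F.A.card = n ∧ AFConnected F ∧ (σ F).ncard = k}

noncomputable def sigmaMax2 (σ : Semantics) (n : ℕ) : ℕ :=
  sSup ({k | ∃ F : AF, F.A.card = n ∧ (σ F).ncard = k} \ {sigmaMax σ n})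

def cfSet (𝕊 : Set (Set ℕ)) : Set (Set ℕ) :=
  {S | S ⊆ ArgS 𝕊 ∧ ∀ a ∈ S, ∀ b ∈ S, (a, b) ∈ PairsS 𝕊}

def plusSet (𝕊 : Set (Set ℕ)) : Set (Set ℕ) :=
  {S | S ∈ cfSet 𝕊 ∧ ∀ T ∈ cfSet 𝕊, S ⊆ T → S = T}

def minusSet (𝕊 : Set (Set ℕ)) : Set (Set ℕ) := plusSet 𝕊 \ 𝕊

def Sig (σ : Semantics) : Set (Set (Set ℕ)) := {𝕊 | ∃ F : AF, σ F = 𝕊}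

def cSig (σ : Semantics) : Set (Set (Set ℕ)) :=
  {𝕊 | ∃ F : AF, AFCompact σ F ∧ σ F = 𝕊}

def Pcon (σ : Semantics) (n : ℕ) : Set ℕ :=
  {k | ∃ F : AF, AFCompact σ F ∧ AFConnected F ∧ F.A.card = n ∧ (σ F).ncard = k}

open Classical in
noncomputable def restrictAF (F : AF) (K : Set ℕ) : AF where
  A := F.A.filter (fun a => a ∈ K)
  R := {p | p ∈ F.R ∧ p.1 ∈ K ∧ p.2 ∈ K}
  R_sub := fun p hp => by
    have h := F.R_sub p hp.1
    simp only [Finset.mem_filter]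
    exact ⟨⟨h.1, hp.2.1⟩, ⟨h.2, hp.2.2⟩⟩

def IsExclusionMapping (𝕊 : Set (Set ℕ)) (Rm : Set (ℕ × ℕ)) : Prop :=
  ∃ f : Set ℕ → ℕ,
    (∀ S ∈ minusSet 𝕊, f S ∈ ArgS 𝕊 ∧ f S ∉ S) ∧
    Rm = {p | ∃ S ∈ minusSet 𝕊, p.1 ∈ S ∧ p.2 = f S ∧ p ∉ PairsS 𝕊}

def Independent (𝕊 : Set (Set ℕ)) : Prop :=
  ∃ Rm : Set (ℕ × ℕ), IsExclusionMapping 𝕊 Rm ∧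
    (∀ a b, (a, b) ∈ Rm → (b, a) ∈ Rm → a = b) ∧
    ∀ S ∈ 𝕊, ∀ a ∈ ArgS 𝕊 \ S, ∃ s ∈ S, (s, a) ∉ Rm ∪ PairsS 𝕊

def ConflictExplicit (σ : Semantics) (F : AF) : Prop :=
  ∀ a ∈ F.A, ∀ b ∈ F.A, (a, b) ∉ PairsS (σ F) → (a, b) ∈ F.R ∨ (b, a) ∈ F.R

noncomputable def canonicalCF (𝕊 : Set (Set ℕ)) (h : IsExtensionSet 𝕊) : AF where
  A := h.toFinset
  R := {p | p.1 ∈ ArgS 𝕊 ∧ p.2 ∈ ArgS 𝕊 ∧ p ∉ PairsS 𝕊}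
  R_sub := fun p hp => by
    exact ⟨(Set.Finite.mem_toFinset _).2 hp.1, (Set.Finite.mem_toFinset _).2 hp.2.1⟩

def sw (a b x : ℕ) : ℕ := if x = a then b else if x = b then a else x

lemma sw_a (a b : ℕ) : sw a b a = b := by simp [sw]

lemma sw_b (a b : ℕ) : sw a b b = a := by
  unfold sw; split_ifs with h <;> simp_all

lemma sw_other {a b x : ℕ} (h1 : x ≠ a) (h2 : x ≠ b) : sw a b x = x := by
  simp [sw, h1, h2]

lemma sw_invol (a b : ℕ) : Function.Involutive (sw a b) := by
  intro x
  rcases eq_or_ne x a with rfl | h1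
  · rw [sw_a, sw_b]
  · rcases eq_or_ne x b with rfl | h2
    · rw [sw_b, sw_a]
    · rw [sw_other h1 h2, sw_other h1 h2]

lemma sw_image_image (a b : ℕ) (S : Set ℕ) : sw a b '' (sw a b '' S) = S := by
  rw [Set.image_image]
  simp [sw_invol a b _]

lemma sw_comm (a b : ℕ) : sw a b = sw b a := by
  funext x; unfold sw; split_ifs <;> omega

lemma even_of_swap (𝕊 : Set (Set ℕ)) (hfin : (ArgS 𝕊).Finite) (a b : ℕ)
    (hone : ∀ S ∈ 𝕊, (a ∈ S ∧ b ∉ S) ∨ (b ∈ S ∧ a ∉ S))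
    (hswap : ∀ S ∈ 𝕊, sw a b '' S ∈ 𝕊) : Even 𝕊.ncard := by
  have h𝕊fin : 𝕊.Finite := by
    apply Set.Finite.subset hfin.finite_subsets
    intro S hS
    exact Set.subset_sUnion_of_mem hS
  set Sa : Set (Set ℕ) := {S | S ∈ 𝕊 ∧ a ∈ S} with hSa
  set Sb : Set (Set ℕ) := {S | S ∈ 𝕊 ∧ b ∈ S} with hSb
  have hUn : 𝕊 = Sa ∪ Sb := by
    ext S
    constructor
    · intro hS
      rcases hone S hS with ⟨h1, _⟩ | ⟨h1, _⟩
      · exact Or.inl ⟨hS, h1⟩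
      · exact Or.inr ⟨hS, h1⟩
    · rintro (⟨h, _⟩ | ⟨h, _⟩) <;> exact h
  have hdisj : Disjoint Sa Sb := by
    rw [Set.disjoint_left]
    rintro S ⟨hS, haS⟩ ⟨_, hbS⟩
    rcases hone S hS with ⟨_, h2⟩ | ⟨_, h2⟩
    · exact h2 hbS
    · exact h2 haS
  have himg : Sb = (Set.image (sw a b)) '' Sa := by
    ext T
    constructor
    · rintro ⟨hT, hbT⟩
      refine ⟨sw a b '' T, ⟨hswap T hT, ?_⟩, sw_image_image a b T⟩
      exact ⟨b, hbT, sw_b a b⟩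
    · rintro ⟨S, ⟨hS, haS⟩, rfl⟩
      exact ⟨hswap S hS, ⟨a, haS, sw_a a b⟩⟩
  have hinj : Function.Injective (Set.image (sw a b)) :=
    Set.image_injective.mpr (sw_invol a b).injective
  have hcard : Sb.ncard = Sa.ncard := by
    rw [himg, Set.ncard_image_of_injective _ hinj]
  have hSafin : Sa.Finite := h𝕊fin.subset (fun S hS => hS.1)
  have hSbfin : Sb.Finite := h𝕊fin.subset (fun S hS => hS.1)
  rw [hUn, Set.ncard_union_eq hdisj hSafin hSbfin, hcard]
  exact ⟨Sa.ncard, rfl⟩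
lemma PairsS_symm {𝕊 : Set (Set ℕ)} {x y : ℕ} (h : (x, y) ∈ PairsS 𝕊) :
    (y, x) ∈ PairsS 𝕊 := by
  obtain ⟨S, hS, h1, h2⟩ := h
  exact ⟨S, hS, h2, h1⟩

lemma pair_extract (𝕊 : Set (Set ℕ)) (K : Set ℕ) (hK : K ∈ compsS 𝕊)
    (hK2 : K.ncard = 2) :
    ∃ a b, a ≠ b ∧ a ∈ ArgS 𝕊 ∧ b ∈ ArgS 𝕊 ∧ (a, b) ∉ PairsS 𝕊 ∧
      (∀ c ∈ ArgS 𝕊, c ≠ a → c ≠ b → (a, c) ∈ PairsS 𝕊 ∧ (b, c) ∈ PairsS 𝕊) := by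
  obtain ⟨a₀, ha₀, hKdef⟩ := hK
  have hreach : ∀ y, Relation.ReflTransGen (nopairs 𝕊) a₀ y → y ∈ K := by
    intro y hy
    rw [hKdef]
    refine ⟨?_, hy⟩
    induction hy with
    | refl => exact ha₀
    | tail _ h _ => exact h.2.1
  obtain ⟨x, y, hxy, hKxy⟩ := Set.ncard_eq_two.mp hK2
  have ha₀K : a₀ ∈ K := hreach a₀ Relation.ReflTransGen.refl
  -- let b be the element of {x,y} distinct from a₀
  obtain ⟨b, hb_ne, hKab⟩ : ∃ b, a₀ ≠ b ∧ K = {a₀, b} := by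
    rw [hKxy] at ha₀K ⊢
    rcases ha₀K with rfl | rfl
    · exact ⟨y, hxy, rfl⟩
    · exact ⟨x, hxy.symm, Set.pair_comm x a₀⟩
  have hbK : b ∈ K := by rw [hKab]; exact Or.inr rfl
  have hbArg : b ∈ ArgS 𝕊 := by rw [hKdef] at hbK; exact hbK.1
  have hbReach : Relation.ReflTransGen (nopairs 𝕊) a₀ b := by
    rw [hKdef] at hbK; exact hbK.2
  have key : ∀ z, Relation.ReflTransGen (nopairs 𝕊) a₀ z →
      z = a₀ ∨ nopairs 𝕊 a₀ b ∨ nopairs 𝕊 b a₀ := by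
    intro z hz
    induction hz with
    | refl => exact Or.inl rfl
    | tail hw hstep ih =>
      rename_i w c'
      rcases ih with h | h | h
      · subst h
        have hcK := hreach c' (Relation.ReflTransGen.single hstep)
        rw [hKab] at hcK
        rcases hcK with h' | h'
        · exact Or.inl h'
        · rw [h'] at hstep
          exact Or.inr (Or.inl hstep)
      · exact Or.inr (Or.inl h)
      · exact Or.inr (Or.inr h)
  have hnP : (a₀, b) ∉ PairsS 𝕊 := by
    rcases key b hbReach with h | h | h
    · exact absurd h.symm hb_ne
    · exact h.2.2
    · exact fun hp => h.2.2 (PairsS_symm hp)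
  refine ⟨a₀, b, hb_ne, ha₀, hbArg, hnP, ?_⟩
  intro c hc hca hcb
  have hcK : c ∉ K := by rw [hKab]; rintro (rfl | rfl) <;> simp_all
  constructor
  · by_contra hp
    exact hcK (hreach c (Relation.ReflTransGen.single ⟨ha₀, hc, hp⟩))
  · by_contra hp
    exact hcK (hreach c (hbReach.tail ⟨hbArg, hc, hp⟩))

section AFLemmas

variable {F : AF} {a b : ℕ}

-- local abbreviation for the localization hypothesis
def Hloc (F : AF) (a b : ℕ) : Prop :=
  ∀ x y, (x, y) ∈ F.R →
    (x = a ∧ y = b) ∨ (x = b ∧ y = a) ∨ (x ≠ a ∧ x ≠ b ∧ y ≠ a ∧ y ≠ b)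

lemma Hloc.symm (h : Hloc F a b) : Hloc F b a := by
  intro x y hxy
  rcases h x y hxy with ⟨h1, h2⟩ | ⟨h1, h2⟩ | ⟨h1, h2, h3, h4⟩ <;> tauto

lemma sw_mem_A (ha : a ∈ F.A) (hb : b ∈ F.A) {x : ℕ} (hx : x ∈ F.A) :
    sw a b x ∈ F.A := by
  rcases eq_or_ne x a with rfl | h1
  · rwa [sw_a]
  · rcases eq_or_ne x b with rfl | h2
    · rwa [sw_b]
    · rwa [sw_other h1 h2]

lemma swap_cf (hab : a ≠ b) (ha : a ∈ F.A) (hb : b ∈ F.A) (hloc : Hloc F a b)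
    {S : Set ℕ} (hS : S ∈ F.cf) : sw a b '' S ∈ F.cf := by
  refine ⟨?_, ?_⟩
  · rintro _ ⟨x, hx, rfl⟩
    exact sw_mem_A ha hb (hS.1 hx)
  · rintro _ ⟨x, hx, rfl⟩ _ ⟨y, hy, rfl⟩ hR
    rcases hloc _ _ hR with ⟨h1, h2⟩ | ⟨h1, h2⟩ | ⟨h1, h2, h3, h4⟩
    · -- sw x = a, sw y = b  ⇒ x = b, y = a ⇒ (a,b)=(sw x, sw y) ∈ R but (y,x)=(a,b)∈R forbidden
      have hx' : x = b := by have := congrArg (sw a b) h1; rwa [sw_invol, sw_a] at this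
      have hy' : y = a := by have := congrArg (sw a b) h2; rwa [sw_invol, sw_b] at this
      subst hx'; subst hy'
      rw [h1, h2] at hR
      exact hS.2 _ hy _ hx hR
    · have hx' : x = a := by have := congrArg (sw a b) h1; rwa [sw_invol, sw_b] at this
      have hy' : y = b := by have := congrArg (sw a b) h2; rwa [sw_invol, sw_a] at this
      subst hx'; subst hy'
      rw [h1, h2] at hR
      exact hS.2 _ hy _ hx hR
    · have hx1 : x ≠ a := fun h => by subst h; rw [sw_a] at h1 h2; exact h2 rfl
      have hx2 : x ≠ b := fun h => by subst h; rw [sw_b] at h1 h2; exact h1 rfl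
      have hy1 : y ≠ a := fun h => by subst h; rw [sw_a] at h3 h4; exact h4 rfl
      have hy2 : y ≠ b := fun h => by subst h; rw [sw_b] at h3 h4; exact h3 rfl
      rw [sw_other hx1 hx2, sw_other hy1 hy2] at hR
      exact hS.2 _ hx _ hy hR

lemma insert_cf (hab : a ≠ b) (ha : a ∈ F.A) (hloc : Hloc F a b)
    {S : Set ℕ} (hS : S ∈ F.cf) (hbS : b ∉ S) : insert a S ∈ F.cf := by
  refine ⟨?_, ?_⟩
  · rintro x (rfl | hx)
    · exact ha
    · exact hS.1 hx
  · rintro x (rfl | hx) y (rfl | hy) hR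
    · rcases hloc _ _ hR with ⟨_, h2⟩ | ⟨h1, _⟩ | ⟨h1, _⟩
      · exact hab h2
      · exact hab h1
      · exact h1 rfl
    · rcases hloc _ _ hR with ⟨_, h2⟩ | ⟨h1, _⟩ | ⟨h1, _⟩
      · exact hbS (h2 ▸ hy)
      · exact hab h1
      · exact h1 rfl
    · rcases hloc _ _ hR with ⟨_, h2⟩ | ⟨h1, _⟩ | ⟨_, _, h3, _⟩
      · exact hab h2
      · exact hbS (h1 ▸ hx)
      · exact h3 rfl
    · exact hS.2 _ hx _ hy hR

lemma hR_of_iff (hloc : Hloc F a b) (hiff : (a, b) ∈ F.R ↔ (b, a) ∈ F.R) :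
    ∀ x y, (x, y) ∈ F.R → (sw a b x, sw a b y) ∈ F.R := by
  intro x y hR
  rcases hloc _ _ hR with ⟨h1, h2⟩ | ⟨h1, h2⟩ | ⟨h1, h2, h3, h4⟩
  · subst h1; subst h2; rw [sw_a, sw_b]; exact hiff.mp hR
  · subst h1; subst h2; rw [sw_a, sw_b]; exact hiff.mpr hR
  · rwa [sw_other h1 h2, sw_other h3 h4]

lemma swap_rng_sub (hR : ∀ x y, (x, y) ∈ F.R → (sw a b x, sw a b y) ∈ F.R)
    (S : Set ℕ) : sw a b '' F.rng S ⊆ F.rng (sw a b '' S) := by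
  rintro _ ⟨z, hz, rfl⟩
  rcases hz with hz | ⟨u, hu, hR'⟩
  · exact Or.inl ⟨z, hz, rfl⟩
  · exact Or.inr ⟨sw a b u, ⟨u, hu, rfl⟩, hR _ _ hR'⟩

lemma swap_rng (hR : ∀ x y, (x, y) ∈ F.R → (sw a b x, sw a b y) ∈ F.R)
    (S : Set ℕ) : F.rng (sw a b '' S) = sw a b '' F.rng S := by
  apply Set.Subset.antisymm
  · intro z hz
    have h2 := swap_rng_sub hR (sw a b '' S)
    rw [sw_image_image] at h2
    have : sw a b z ∈ F.rng S := h2 ⟨z, hz, rfl⟩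
    exact ⟨sw a b z, this, sw_invol a b z⟩
  · exact swap_rng_sub hR S

lemma swap_adm (hab : a ≠ b) (ha : a ∈ F.A) (hb : b ∈ F.A) (hloc : Hloc F a b)
    (hR : ∀ x y, (x, y) ∈ F.R → (sw a b x, sw a b y) ∈ F.R)
    {S : Set ℕ} (hS : S ∈ F.adm) : sw a b '' S ∈ F.adm := by
  refine ⟨swap_cf hab ha hb hloc hS.1, ?_⟩
  rintro _ ⟨x, hx, rfl⟩ c hc
  have hc' : (sw a b c, x) ∈ F.R := by
    have := hR _ _ hc
    rwa [sw_invol] at this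
  obtain ⟨u, hu, hu'⟩ := hS.2 x hx _ hc'
  refine ⟨sw a b u, ⟨u, hu, rfl⟩, ?_⟩
  have := hR _ _ hu'
  rwa [sw_invol] at this

end AFLemmas

lemma rng_mono {F : AF} {S T : Set ℕ} (h : S ⊆ T) : F.rng S ⊆ F.rng T := by
  rintro z (hz | ⟨u, hu, hR⟩)
  · exact Or.inl (h hz)
  · exact Or.inr ⟨u, h hu, hR⟩

section SemLemmas

variable {F : AF} {a b : ℕ}

lemma image_ssubset {α β : Type*} {f : α → β} (hf : Function.Injective f)
    {s t : Set α} (h : s ⊂ t) : f '' s ⊂ f '' t := by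
  rw [Set.ssubset_def] at h ⊢
  exact ⟨Set.image_mono h.1, fun hc => h.2 ((Set.image_subset_image_iff hf).mp hc)⟩

lemma naive_swap (hab : a ≠ b) (ha : a ∈ F.A) (hb : b ∈ F.A) (hloc : Hloc F a b)
    {S : Set ℕ} (hS : S ∈ F.naive) : sw a b '' S ∈ F.naive := by
  refine ⟨swap_cf hab ha hb hloc hS.1, ?_⟩
  intro T hT hsub
  have h1 : S ⊆ sw a b '' T := by
    intro x hx
    exact ⟨sw a b x, hsub ⟨x, hx, rfl⟩, sw_invol a b x⟩
  have h2 := hS.2 _ (swap_cf hab ha hb hloc hT) h1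
  rw [h2, sw_image_image]

lemma stb_swap (hab : a ≠ b) (ha : a ∈ F.A) (hb : b ∈ F.A) (hloc : Hloc F a b)
    (hR : ∀ x y, (x, y) ∈ F.R → (sw a b x, sw a b y) ∈ F.R)
    {S : Set ℕ} (hS : S ∈ F.stb) : sw a b '' S ∈ F.stb := by
  refine ⟨swap_cf hab ha hb hloc hS.1, ?_⟩
  intro x hx hxS
  have hx' : sw a b x ∈ F.A := sw_mem_A ha hb hx
  have hx'S : sw a b x ∉ S := fun h => hxS ⟨sw a b x, h, sw_invol a b x⟩
  obtain ⟨u, hu, hu'⟩ := hS.2 _ hx' hx'S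
  refine ⟨sw a b u, ⟨u, hu, rfl⟩, ?_⟩
  have := hR _ _ hu'
  rwa [sw_invol] at this

lemma pref_swap (hab : a ≠ b) (ha : a ∈ F.A) (hb : b ∈ F.A) (hloc : Hloc F a b)
    (hR : ∀ x y, (x, y) ∈ F.R → (sw a b x, sw a b y) ∈ F.R)
    {S : Set ℕ} (hS : S ∈ F.pref) : sw a b '' S ∈ F.pref := by
  refine ⟨swap_adm hab ha hb hloc hR hS.1, ?_⟩
  intro T hT hsub
  have h1 : S ⊆ sw a b '' T := by
    intro x hx
    exact ⟨sw a b x, hsub ⟨x, hx, rfl⟩, sw_invol a b x⟩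
  have h2 := hS.2 _ (swap_adm hab ha hb hloc hR hT) h1
  rw [h2, sw_image_image]

lemma stage_swap (hab : a ≠ b) (ha : a ∈ F.A) (hb : b ∈ F.A) (hloc : Hloc F a b)
    (hR : ∀ x y, (x, y) ∈ F.R → (sw a b x, sw a b y) ∈ F.R)
    {S : Set ℕ} (hS : S ∈ F.stage) : sw a b '' S ∈ F.stage := by
  refine ⟨swap_cf hab ha hb hloc hS.1, ?_⟩
  rintro ⟨T, hT, hss⟩
  apply hS.2
  refine ⟨sw a b '' T, swap_cf hab ha hb hloc hT, ?_⟩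
  rw [swap_rng hR S] at hss
  rw [swap_rng hR T]
  have := image_ssubset (sw_invol a b).injective hss
  rwa [sw_image_image] at this

lemma sem_swap (hab : a ≠ b) (ha : a ∈ F.A) (hb : b ∈ F.A) (hloc : Hloc F a b)
    (hR : ∀ x y, (x, y) ∈ F.R → (sw a b x, sw a b y) ∈ F.R)
    {S : Set ℕ} (hS : S ∈ F.sem) : sw a b '' S ∈ F.sem := by
  refine ⟨swap_adm hab ha hb hloc hR hS.1, ?_⟩
  rintro ⟨T, hT, hss⟩
  apply hS.2
  refine ⟨sw a b '' T, swap_adm hab ha hb hloc hR hT, ?_⟩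
  rw [swap_rng hR S] at hss
  rw [swap_rng hR T]
  have := image_ssubset (sw_invol a b).injective hss
  rwa [sw_image_image] at this

end SemLemmas

lemma stage_asym {F : AF} {a b : ℕ} (hab : a ≠ b) (ha : a ∈ F.A) (hloc : Hloc F a b)
    {S : Set ℕ} (hS : S ∈ F.stage) (hbS : b ∈ S) (haS : a ∉ S)
    (hRab : (a, b) ∈ F.R) (hRba : (b, a) ∉ F.R) : False := by
  set T : Set ℕ := insert a (S \ {b}) with hT
  have hTcf : T ∈ F.cf := by
    constructor
    · rintro x (rfl | ⟨hx, _⟩)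
      · exact ha
      · exact hS.1.1 hx
    · rintro x (rfl | ⟨hx, hxb⟩) y (rfl | ⟨hy, hyb⟩) hR
      · rcases hloc _ _ hR with ⟨_, h2⟩ | ⟨h1, _⟩ | ⟨h1, _⟩
        · exact hab h2
        · exact hab h1
        · exact h1 rfl
      · rcases hloc _ _ hR with ⟨_, h2⟩ | ⟨h1, _⟩ | ⟨h1, _⟩
        · exact hyb h2
        · exact hab h1
        · exact h1 rfl
      · rcases hloc _ _ hR with ⟨_, h2⟩ | ⟨h1, _⟩ | ⟨_, _, h3, _⟩
        · exact hab h2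
        · exact hxb h1
        · exact h3 rfl
      · exact hS.1.2 _ hx _ hy hR
  have hsub : F.rng S ⊆ F.rng T := by
    rintro z (hz | ⟨u, hu, hR⟩)
    · by_cases hzb : z = b
      · subst hzb
        exact Or.inr ⟨a, Or.inl rfl, hRab⟩
      · exact Or.inl (Or.inr ⟨hz, hzb⟩)
    · by_cases hub : u = b
      · subst hub
        exfalso
        rcases hloc _ _ hR with ⟨h1, _⟩ | ⟨_, h2⟩ | ⟨_, h2, _, _⟩
        · exact hab h1.symm
        · exact hRba (h2 ▸ hR)
        · exact h2 rfl
      · exact Or.inr ⟨u, Or.inr ⟨hu, hub⟩, hR⟩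
  have haT : a ∈ F.rng T := Or.inl (Or.inl rfl)
  have haS' : a ∉ F.rng S := by
    rintro (h | ⟨u, hu, hR⟩)
    · exact haS h
    · rcases hloc _ _ hR with ⟨_, h2⟩ | ⟨h1, _⟩ | ⟨_, _, h3, _⟩
      · exact hab h2
      · exact hRba (h1 ▸ hR)
      · exact h3 rfl
  apply hS.2
  refine ⟨T, hTcf, ?_⟩
  rw [Set.ssubset_def]
  exact ⟨hsub, fun hc => haS' (hc haT)⟩

lemma insert_adm {F : AF} {a b : ℕ} (hab : a ≠ b) (ha : a ∈ F.A) (hloc : Hloc F a b)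
    (hiff : (a, b) ∈ F.R ↔ (b, a) ∈ F.R) {S : Set ℕ} (hS : S ∈ F.adm) (hbS : b ∉ S) :
    insert a S ∈ F.adm := by
  refine ⟨insert_cf hab ha hloc hS.1 hbS, ?_⟩
  intro x hx c hc
  rcases Set.mem_insert_iff.mp hx with hxa | hx
  · rw [hxa] at hc
    rcases hloc _ _ hc with ⟨_, h2⟩ | ⟨h1, _⟩ | ⟨_, _, h3, _⟩
    · exact absurd h2 hab
    · exact ⟨a, Set.mem_insert a S, by rw [h1]; exact hiff.mpr (h1 ▸ hc)⟩
    · exact absurd rfl h3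
  · obtain ⟨u, hu, hu'⟩ := hS.2 x hx c hc
    exact ⟨u, Set.mem_insert_of_mem a hu, hu'⟩

theorem odd_extensions_no_size_two_component (σ : Semantics)
    (hσ : σ ∈ StandardSemantics) (𝕊 : Set (Set ℕ)) (hext : IsExtensionSet 𝕊)
    (hodd : Odd 𝕊.ncard) (K : Set ℕ) (hK : K ∈ compsS 𝕊) (hK2 : K.ncard = 2) :
    ¬ ∃ F : AF, AFCompact σ F ∧ σ F = 𝕊 := by
  rintro ⟨F, hcomp, hσF⟩
  obtain ⟨a, b, hab, haArg, hbArg, hnP, hout⟩ := pair_extract 𝕊 K hK hK2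
  have hσ5 : σ = AF.naive ∨ σ = AF.stb ∨ σ = AF.stage ∨ σ = AF.pref ∨ σ = AF.sem := by
    simpa [StandardSemantics] using hσ
  have hcf : ∀ S ∈ 𝕊, S ∈ F.cf := by
    intro S hS
    rw [← hσF] at hS
    rcases hσ5 with h | h | h | h | h <;> subst h
    · exact hS.1
    · exact hS.1
    · exact hS.1
    · exact hS.1.1
    · exact hS.1.1
  have hArgA : ∀ x ∈ ArgS 𝕊, x ∈ F.A := by
    rintro x ⟨S, hS, hx⟩
    exact (hcf S hS).1 hx
  have haA : a ∈ F.A := hArgA a haArg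
  have hbA : b ∈ F.A := hArgA b hbArg
  have hAArg : ∀ x ∈ F.A, x ∈ ArgS 𝕊 := by
    intro x hx
    obtain ⟨S, hS, h⟩ := hcomp x hx
    exact ⟨S, hσF ▸ hS, h⟩
  have hnR : ∀ x y, (x, y) ∈ PairsS 𝕊 → (x, y) ∉ F.R := by
    rintro x y ⟨S, hS, h1, h2⟩ hR
    exact (hcf S hS).2 _ h1 _ h2 hR
  have hself : ∀ x ∈ ArgS 𝕊, (x, x) ∈ PairsS 𝕊 := by
    rintro x ⟨S, hS, hx⟩
    exact ⟨S, hS, hx, hx⟩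
  have hloc : Hloc F a b := by
    intro x y hxy
    obtain ⟨hxA, hyA⟩ := F.R_sub _ hxy
    have hxArg := hAArg x hxA
    have hyArg := hAArg y hyA
    rcases eq_or_ne x a with hxa | hxa
    · rcases eq_or_ne y b with hyb | hyb
      · exact Or.inl ⟨hxa, hyb⟩
      · exfalso
        rcases eq_or_ne y a with hya | hya
        · exact hnR _ _ (hself a haArg) (by rw [hxa, hya] at hxy; exact hxy)
        · exact hnR _ _ (hout y hyArg hya hyb).1 (hxa ▸ hxy)
    · rcases eq_or_ne x b with hxb | hxb
      · rcases eq_or_ne y a with hya | hya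
        · exact Or.inr (Or.inl ⟨hxb, hya⟩)
        · exfalso
          rcases eq_or_ne y b with hyb | hyb
          · exact hnR _ _ (hself b hbArg) (by rw [hxb, hyb] at hxy; exact hxy)
          · exact hnR _ _ (hout y hyArg hya hyb).2 (hxb ▸ hxy)
      · rcases eq_or_ne y a with hya | hya
        · exact absurd (hya ▸ hxy) (hnR _ _ (PairsS_symm (hout x hxArg hxa hxb).1))
        · rcases eq_or_ne y b with hyb | hyb
          · exact absurd (hyb ▸ hxy) (hnR _ _ (PairsS_symm (hout x hxArg hxa hxb).2))
          · exact Or.inr (Or.inr ⟨hxa, hxb, hya, hyb⟩)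
  have hmost : ∀ S ∈ 𝕊, ¬(a ∈ S ∧ b ∈ S) := fun S hS ⟨h1, h2⟩ => hnP ⟨S, hS, h1, h2⟩
  obtain ⟨Sa, hSa𝕊, haSa⟩ := id haArg
  obtain ⟨Sb, hSb𝕊, hbSb⟩ := id hbArg
  have hbSa : b ∉ Sa := fun h => hmost Sa hSa𝕊 ⟨haSa, h⟩
  have haSb : a ∉ Sb := fun h => hmost Sb hSb𝕊 ⟨h, hbSb⟩
  have heven : Even 𝕊.ncard := by
    rcases hσ5 with h | h | h | h | h <;> subst h
    · refine even_of_swap 𝕊 hext a b ?_ ?_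
      · intro S hS
        by_cases haS : a ∈ S
        · exact Or.inl ⟨haS, fun h => hmost S hS ⟨haS, h⟩⟩
        · by_cases hbS : b ∈ S
          · exact Or.inr ⟨hbS, haS⟩
          · exfalso
            have hSn : S ∈ F.naive := by rw [hσF]; exact hS
            have hmax := hSn.2 _ (insert_cf hab haA hloc hSn.1 hbS) (Set.subset_insert a S)
            exact haS (by rw [hmax]; exact Set.mem_insert a S)
      · intro S hS
        rw [← hσF] at hS ⊢
        exact naive_swap hab haA hbA hloc hS
    · have hSaStb : Sa ∈ F.stb := by rw [hσF]; exact hSa𝕊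
      have hSbStb : Sb ∈ F.stb := by rw [hσF]; exact hSb𝕊
      have hRab : (a, b) ∈ F.R := by
        obtain ⟨u, hu, huR⟩ := hSaStb.2 b hbA hbSa
        rcases hloc _ _ huR with ⟨h1, _⟩ | ⟨_, h2⟩ | ⟨_, _, _, h4⟩
        · rwa [h1] at huR
        · exact absurd h2.symm hab
        · exact absurd rfl h4
      have hRba : (b, a) ∈ F.R := by
        obtain ⟨u, hu, huR⟩ := hSbStb.2 a haA haSb
        rcases hloc _ _ huR with ⟨_, h2⟩ | ⟨h1, _⟩ | ⟨_, _, h3, _⟩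
        · exact absurd h2 hab
        · rwa [h1] at huR
        · exact absurd rfl h3
      have hR := hR_of_iff hloc ⟨fun _ => hRba, fun _ => hRab⟩
      refine even_of_swap 𝕊 hext a b ?_ ?_
      · intro S hS
        have hSstb : S ∈ F.stb := by rw [hσF]; exact hS
        by_cases haS : a ∈ S
        · exact Or.inl ⟨haS, fun h => hmost S hS ⟨haS, h⟩⟩
        · refine Or.inr ⟨?_, haS⟩
          obtain ⟨u, hu, huR⟩ := hSstb.2 a haA haS
          rcases hloc _ _ huR with ⟨_, h2⟩ | ⟨h1, _⟩ | ⟨_, _, h3, _⟩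
          · exact absurd h2 hab
          · exact h1 ▸ hu
          · exact absurd rfl h3
      · intro S hS
        rw [← hσF] at hS ⊢
        exact stb_swap hab haA hbA hloc hR hS
    · have hSaStage : Sa ∈ F.stage := by rw [hσF]; exact hSa𝕊
      have hSbStage : Sb ∈ F.stage := by rw [hσF]; exact hSb𝕊
      have hiff : (a, b) ∈ F.R ↔ (b, a) ∈ F.R := by
        constructor
        · intro hRab
          by_contra hRba
          exact stage_asym hab haA hloc hSbStage hbSb haSb hRab hRba
        · intro hRba
          by_contra hRab
          exact stage_asym hab.symm hbA hloc.symm hSaStage haSa hbSa hRba hRab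
      have hR := hR_of_iff hloc hiff
      refine even_of_swap 𝕊 hext a b ?_ ?_
      · intro S hS
        have hSst : S ∈ F.stage := by rw [hσF]; exact hS
        by_cases haS : a ∈ S
        · exact Or.inl ⟨haS, fun h => hmost S hS ⟨haS, h⟩⟩
        · by_cases hbS : b ∈ S
          · exact Or.inr ⟨hbS, haS⟩
          · exfalso
            apply hSst.2
            refine ⟨insert a S, insert_cf hab haA hloc hSst.1 hbS, ?_⟩
            rw [Set.ssubset_def]
            refine ⟨rng_mono (Set.subset_insert a S), fun hc => ?_⟩
            have haT : a ∈ F.rng (insert a S) := Or.inl (Set.mem_insert a S)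
            rcases hc haT with h | ⟨u, hu, huR⟩
            · exact haS h
            · rcases hloc _ _ huR with ⟨_, h2⟩ | ⟨h1, _⟩ | ⟨_, _, h3, _⟩
              · exact hab h2
              · exact hbS (h1 ▸ hu)
              · exact h3 rfl
      · intro S hS
        rw [← hσF] at hS ⊢
        exact stage_swap hab haA hbA hloc hR hS
    · have hSaP : Sa ∈ F.pref := by rw [hσF]; exact hSa𝕊
      have hSbP : Sb ∈ F.pref := by rw [hσF]; exact hSb𝕊
      have hiff : (a, b) ∈ F.R ↔ (b, a) ∈ F.R := by
        constructor
        · intro hRab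
          obtain ⟨u, hu, huR⟩ := hSbP.1.2 b hbSb a hRab
          rcases hloc _ _ huR with ⟨_, h2⟩ | ⟨h1, _⟩ | ⟨_, _, h3, _⟩
          · exact absurd h2 hab
          · exact h1 ▸ huR
          · exact absurd rfl h3
        · intro hRba
          obtain ⟨u, hu, huR⟩ := hSaP.1.2 a haSa b hRba
          rcases hloc _ _ huR with ⟨h1, _⟩ | ⟨_, h2⟩ | ⟨_, _, _, h4⟩
          · exact h1 ▸ huR
          · exact absurd h2.symm hab
          · exact absurd rfl h4
      have hR := hR_of_iff hloc hiff
      refine even_of_swap 𝕊 hext a b ?_ ?_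
      · intro S hS
        have hSp : S ∈ F.pref := by rw [hσF]; exact hS
        by_cases haS : a ∈ S
        · exact Or.inl ⟨haS, fun h => hmost S hS ⟨haS, h⟩⟩
        · by_cases hbS : b ∈ S
          · exact Or.inr ⟨hbS, haS⟩
          · exfalso
            have hmax := hSp.2 _ (insert_adm hab haA hloc hiff hSp.1 hbS)
              (Set.subset_insert a S)
            exact haS (by rw [hmax]; exact Set.mem_insert a S)
      · intro S hS
        rw [← hσF] at hS ⊢
        exact pref_swap hab haA hbA hloc hR hS
    · have hSaSem : Sa ∈ F.sem := by rw [hσF]; exact hSa𝕊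
      have hSbSem : Sb ∈ F.sem := by rw [hσF]; exact hSb𝕊
      have hiff : (a, b) ∈ F.R ↔ (b, a) ∈ F.R := by
        constructor
        · intro hRab
          obtain ⟨u, hu, huR⟩ := hSbSem.1.2 b hbSb a hRab
          rcases hloc _ _ huR with ⟨_, h2⟩ | ⟨h1, _⟩ | ⟨_, _, h3, _⟩
          · exact absurd h2 hab
          · exact h1 ▸ huR
          · exact absurd rfl h3
        · intro hRba
          obtain ⟨u, hu, huR⟩ := hSaSem.1.2 a haSa b hRba
          rcases hloc _ _ huR with ⟨h1, _⟩ | ⟨_, h2⟩ | ⟨_, _, _, h4⟩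
          · exact h1 ▸ huR
          · exact absurd h2.symm hab
          · exact absurd rfl h4
      have hR := hR_of_iff hloc hiff
      refine even_of_swap 𝕊 hext a b ?_ ?_
      · intro S hS
        have hSs : S ∈ F.sem := by rw [hσF]; exact hS
        by_cases haS : a ∈ S
        · exact Or.inl ⟨haS, fun h => hmost S hS ⟨haS, h⟩⟩
        · by_cases hbS : b ∈ S
          · exact Or.inr ⟨hbS, haS⟩
          · exfalso
            apply hSs.2
            refine ⟨insert a S, insert_adm hab haA hloc hiff hSs.1 hbS, ?_⟩
            rw [Set.ssubset_def]
            refine ⟨rng_mono (Set.subset_insert a S), fun hc => ?_⟩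
            have haT : a ∈ F.rng (insert a S) := Or.inl (Set.mem_insert a S)
            rcases hc haT with h | ⟨u, hu, huR⟩
            · exact haS h
            · rcases hloc _ _ huR with ⟨_, h2⟩ | ⟨h1, _⟩ | ⟨_, _, h3, _⟩
              · exact hab h2
              · exact hbS (h1 ▸ hu)
              · exact h3 rfl
      · intro S hS
        rw [← hσF] at hS ⊢
        exact sem_swap hab haA hbA hloc hR hS
  exact (Nat.not_even_iff_odd.mpr hodd) heven
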